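/- If G is a finite group and x ∈ G is such that the conjugacy class x^G is real (i.e., closed under inversion) and |x^G| is odd, then x² = 1. -/
import Mathlib

/-- The `G`-conjugacy class of `x`. -/
def gClass {G : Type*} [Group G] (x : G) : Set G := {y | ∃ g : G, y = g * x * g⁻¹}

private lemma invol_fixed {α : Type*} [DecidableEq α] (f : α → α) :
    ∀ n (s : Finset α), s.card = n → (∀ a ∈ s, f a ∈ s) → (∀ a ∈ s, f (f a) = a) →
      Odd s.card → ∃ a ∈ s, f a = a := by
  intro n
  induction n using Nat.strong_induction_on with
  | _ n ih =>
    intro s hcard hmaps hinv hodd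
    have hne : s.Nonempty := by
      rcases Finset.eq_empty_or_nonempty s with h | h
      · simp [h] at hodd
      · exact h
    obtain ⟨a, ha⟩ := hne
    by_cases hfa : f a = a
    · exact ⟨a, ha, hfa⟩
    · set t := (s.erase a).erase (f a) with ht
      have hfas : f a ∈ s := hmaps a ha
      have htcard : t.card = s.card - 2 := by
        rw [ht, Finset.card_erase_of_mem, Finset.card_erase_of_mem ha]
        · omega
        · exact Finset.mem_erase.2 ⟨hfa, hfas⟩
      have hmaps' : ∀ b ∈ t, f b ∈ t := by
        intro b hb
        have hbs : b ∈ s := Finset.mem_of_mem_erase (Finset.mem_of_mem_erase hb)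
        have hbne : b ≠ a := Finset.ne_of_mem_erase (Finset.mem_of_mem_erase hb)
        have hbnfa : b ≠ f a := Finset.ne_of_mem_erase hb
        refine Finset.mem_erase.2 ⟨?_, Finset.mem_erase.2 ⟨?_, hmaps b hbs⟩⟩
        · intro h; exact hbne (by rw [← hinv b hbs, h, hinv a ha])
        · intro h; exact hbnfa (by rw [← hinv b hbs, h])
      have hinv' : ∀ b ∈ t, f (f b) = b := fun b hb =>
        hinv b (Finset.mem_of_mem_erase (Finset.mem_of_mem_erase hb))
      have hscard2 : 2 ≤ s.card := by
        have : ({a, f a} : Finset α) ⊆ s := by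
          intro z hz; rcases Finset.mem_insert.1 hz with h | h
          · exact h ▸ ha
          · exact (Finset.mem_singleton.1 h) ▸ hfas
        calc 2 = ({a, f a} : Finset α).card := by
                rw [Finset.card_insert_of_notMem (by simpa using (Ne.symm hfa)),
                  Finset.card_singleton]
          _ ≤ s.card := Finset.card_le_card this
      have hodd' : Odd t.card := by
        rw [htcard]
        obtain ⟨k, hk⟩ := hodd
        exact ⟨k - 1, by omega⟩
      obtain ⟨b, hb, hfb⟩ := ih t.card (by omega) t rfl hmaps' hinv' hodd'
      exact ⟨b, Finset.mem_of_mem_erase (Finset.mem_of_mem_erase hb), hfb⟩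

/-- If the conjugacy class of `x` is real and has odd size, then `x ^ 2 = 1`. -/
theorem stmt_3 {G : Type*} [Group G] [Fintype G] (x : G)
    (hreal : ∀ y ∈ gClass x, y⁻¹ ∈ gClass x)
    (hodd : Odd (gClass x).ncard) :
    x ^ 2 = 1 := by
  classical
  have hfin : (gClass x).Finite := Set.toFinite _
  have hcard : (gClass x).ncard = hfin.toFinset.card := Set.ncard_eq_toFinset_card _ hfin
  have hmaps : ∀ a ∈ hfin.toFinset, a⁻¹ ∈ hfin.toFinset := by
    intro a ha
    rw [Set.Finite.mem_toFinset] at ha ⊢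
    exact hreal a ha
  obtain ⟨y, hy, hfy⟩ := invol_fixed (fun a : G => a⁻¹) hfin.toFinset.card hfin.toFinset rfl
    hmaps (fun a _ => inv_inv a) (hcard ▸ hodd)
  rw [Set.Finite.mem_toFinset] at hy
  obtain ⟨g, rfl⟩ := hy
  have : (g * x * g⁻¹) * (g * x * g⁻¹) = 1 := mul_eq_one_iff_inv_eq.mpr hfy
  have hx2 : x * x = 1 := by
    have := congrArg (fun z => g⁻¹ * z * g) this
    simpa [mul_assoc] using this
  rw [pow_two, hx2]
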